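/- Fix a nonempty finite set D, an integer r ≥ 2, and an integer d. Let Δ be the set of maps α : D → Fin r → ℝ such that for every x ∈ D, 0 ≤ α x 0 < α x 1 < ⋯ < α x (r−1) < 1. Call n : D → Fin r → ℕ admissible if n x i ∈ {0,1} for all x, i and there is an integer r' with 0 < r' < r and Σ_i n x i = r' for every x ∈ D; write r'(n) for this common value and let 𝒩 be the set of admissible n. For α ∈ Δ and n ∈ 𝒩 define M(α,n) = ⌊(r'(n)·d + r'(n)·Σ_{x∈D} Σ_i α x i − r·Σ_{x∈D} Σ_i (n x i)·(α x i))/r⌋ ∈ ℤ. Then the set { (fun n ↦ M(α,n)) : α ∈ Δ } is a finite subset of 𝒩 → ℤ. -/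
import Mathlib

theorem stmt_1 {D : Type*} [Fintype D] [Nonempty D] (r : ℕ) (hr : 2 ≤ r) (d : ℤ) :
    Set.Finite
      { F : {n : D → Fin r → ℕ //
              (∀ (x : D) (i : Fin r), n x i = 0 ∨ n x i = 1) ∧
              ∃ r' : ℕ, 0 < r' ∧ r' < r ∧ ∀ x : D, ∑ i, n x i = r'} → ℤ |
        ∃ α : D → Fin r → ℝ,
          (∀ x : D, 0 ≤ α x ⟨0, by omega⟩ ∧ StrictMono (α x) ∧ α x ⟨r - 1, by omega⟩ < 1) ∧
          F = fun n =>
            ⌊(((∑ i, n.1 (Classical.arbitrary D) i : ℕ) : ℝ) * (d : ℝ)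
                + ((∑ i, n.1 (Classical.arbitrary D) i : ℕ) : ℝ) * (∑ x : D, ∑ i, α x i)
                - (r : ℝ) * (∑ x : D, ∑ i, (n.1 x i : ℝ) * α x i)) / (r : ℝ)⌋ } := by
  have hfin : Finite {n : D → Fin r → ℕ //
      (∀ (x : D) (i : Fin r), n x i = 0 ∨ n x i = 1) ∧
      ∃ r' : ℕ, 0 < r' ∧ r' < r ∧ ∀ x : D, ∑ i, n x i = r'} := by
    refine Finite.of_injective
      (fun n => (fun x i => (⟨min (n.1 x i) 1, by omega⟩ : Fin 2)) : _ → D → Fin r → Fin 2) ?_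
    intro n m h
    apply Subtype.ext
    funext x i
    have hn := n.2.1 x i
    have hm := m.2.1 x i
    have h2 := congrFun (congrFun h x) i
    simp only [Fin.mk.injEq] at h2
    omega
  set B : ℤ := |d| + (Fintype.card D : ℤ) * r with hB
  apply Set.Finite.subset (Set.Finite.pi (fun _ => Set.finite_Icc (-B) B))
  rintro F ⟨α, hα, rfl⟩
  rw [Set.mem_pi]
  intro n _
  simp only [Set.mem_Icc]
  -- bounds on α
  have hα' : ∀ x (i : Fin r), 0 ≤ α x i ∧ α x i ≤ 1 := by
    intro x i
    obtain ⟨h0, hm, h1⟩ := hα x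
    constructor
    · exact le_trans h0 (hm.monotone (by simp [Fin.le_def]))
    · refine le_of_lt (lt_of_le_of_lt (hm.monotone ?_) h1)
      simp only [Fin.le_def]
      omega
  have hrpos : (0 : ℝ) < r := by positivity
  set y := Classical.arbitrary D with hy
  set r' : ℕ := ∑ i, n.1 y i with hr'
  obtain ⟨hn01, r0, hr0pos, hr0r, hsum⟩ := n.2
  have hr'R : (r' : ℝ) ≤ r := by
    have : r' = r0 := hsum y
    have : r' ≤ r := by omega
    exact_mod_cast this
  have hr'0 : (0 : ℝ) ≤ r' := by positivity
  set S : ℝ := ∑ x : D, ∑ i, α x i with hS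
  set T : ℝ := ∑ x : D, ∑ i, (n.1 x i : ℝ) * α x i with hT
  set c : ℝ := (Fintype.card D : ℝ) with hc
  have hS0 : 0 ≤ S := by
    apply Finset.sum_nonneg; intro x _
    apply Finset.sum_nonneg; intro i _
    exact (hα' x i).1
  have hSle : S ≤ c * r := by
    have : S ≤ ∑ _x : D, ∑ _i : Fin r, (1 : ℝ) := by
      apply Finset.sum_le_sum; intro x _
      apply Finset.sum_le_sum; intro i _
      exact (hα' x i).2
    simpa [mul_comm] using this
  have hT0 : 0 ≤ T := by
    apply Finset.sum_nonneg; intro x _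
    apply Finset.sum_nonneg; intro i _
    exact mul_nonneg (by positivity) (hα' x i).1
  have hTle : T ≤ c * r := by
    have : T ≤ ∑ _x : D, ∑ _i : Fin r, (1 : ℝ) := by
      apply Finset.sum_le_sum; intro x _
      apply Finset.sum_le_sum; intro i _
      have h1 : (n.1 x i : ℝ) ≤ 1 := by
        rcases hn01 x i with h | h <;> simp [h]
      calc (n.1 x i : ℝ) * α x i ≤ 1 * 1 :=
            mul_le_mul h1 (hα' x i).2 (hα' x i).1 zero_le_one
        _ = 1 := by ring
    simpa [mul_comm] using this
  set E : ℝ := (r' : ℝ) * (d : ℝ) + (r' : ℝ) * S - (r : ℝ) * T with hE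
  have hd1 : (d : ℝ) ≤ ((|d| : ℤ) : ℝ) := by exact_mod_cast le_abs_self d
  have hd2 : -(((|d| : ℤ)) : ℝ) ≤ (d : ℝ) := by exact_mod_cast neg_abs_le d
  have habs0 : (0 : ℝ) ≤ ((|d| : ℤ) : ℝ) := by positivity
  have hBR : ((B : ℤ) : ℝ) = ((|d| : ℤ) : ℝ) + c * r := by rw [hB]; push_cast; ring
  have h1 : (r' : ℝ) * (d : ℝ) ≤ (r' : ℝ) * ((|d| : ℤ) : ℝ) :=
    mul_le_mul_of_nonneg_left hd1 hr'0
  have h1' : (r' : ℝ) * (-(((|d| : ℤ)) : ℝ)) ≤ (r' : ℝ) * (d : ℝ) :=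
    mul_le_mul_of_nonneg_left hd2 hr'0
  have h2 : (r' : ℝ) * ((|d| : ℤ) : ℝ) ≤ (r : ℝ) * ((|d| : ℤ) : ℝ) :=
    mul_le_mul_of_nonneg_right hr'R habs0
  have h3 : (r' : ℝ) * S ≤ (r : ℝ) * (c * r) :=
    mul_le_mul hr'R hSle hS0 (le_of_lt hrpos)
  have h4 : (r : ℝ) * T ≤ (r : ℝ) * (c * r) :=
    mul_le_mul_of_nonneg_left hTle (le_of_lt hrpos)
  have hT0' : 0 ≤ (r : ℝ) * T := mul_nonneg (le_of_lt hrpos) hT0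
  have hS0' : 0 ≤ (r' : ℝ) * S := mul_nonneg hr'0 hS0
  have hup : E / (r : ℝ) ≤ ((B : ℤ) : ℝ) := by
    rw [div_le_iff₀ hrpos, hBR, hE]
    nlinarith [h1, h2, h3, hT0']
  have hlo : (((-B : ℤ)) : ℝ) ≤ E / (r : ℝ) := by
    rw [le_div_iff₀ hrpos]
    have hneg : (((-B : ℤ)) : ℝ) = -(((B : ℤ)) : ℝ) := by push_cast; ring
    rw [hneg, hBR, hE]
    nlinarith [h1', h2, h4, hS0']
  constructor
  · exact Int.le_floor.mpr hlo
  · calc ⌊E / (r : ℝ)⌋ ≤ ⌊((B : ℤ) : ℝ)⌋ := Int.floor_mono hup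
      _ = B := Int.floor_intCast B
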